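/- Let n ≥ 1 be an integer. The second derivative of V_n at 0 equals −4·∏_{k=1}^n (k−1/2)⁴ · Σ_{k=1}^n (k−1/2)^{−2}; in particular V_n''(0) < 0. -/

import Mathlib

open Finset

/-- The φ^{4n} potential `V_n(x) = ∏_{k=1}^n (x² − (k−1/2)²)²`. -/
noncomputable def Vn (n : ℕ) : ℝ → ℝ :=
  fun x => ∏ k ∈ Finset.Icc 1 n, (x ^ 2 - ((k : ℝ) - 1 / 2) ^ 2) ^ 2

noncomputable def gfun (k : ℕ) : ℝ → ℝ := fun x => (x ^ 2 - ((k : ℝ) - 1 / 2) ^ 2) ^ 2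

noncomputable def bfun (k : ℕ) : ℝ → ℝ := fun x => 4 * x ^ 3 - 4 * ((k : ℝ) - 1 / 2) ^ 2 * x

lemma hasDerivAt_gfun (k : ℕ) (x : ℝ) : HasDerivAt (gfun k) (bfun k x) x := by
  have h1 : HasDerivAt (fun x : ℝ => x ^ 2 - ((k : ℝ) - 1 / 2) ^ 2) (2 * x) x := by
    simpa using (hasDerivAt_pow 2 x).sub_const (((k : ℝ) - 1 / 2) ^ 2)
  have h2 := h1.fun_pow 2
  refine h2.congr_deriv ?_
  simp [bfun]
  ring

lemma hasDerivAt_bfun (k : ℕ) (x : ℝ) :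
    HasDerivAt (bfun k) (12 * x ^ 2 - 4 * ((k : ℝ) - 1 / 2) ^ 2) x := by
  have h1 : HasDerivAt (fun x : ℝ => 4 * x ^ 3) (12 * x ^ 2) x := by
    have := (hasDerivAt_pow 3 x).const_mul (4 : ℝ)
    convert this using 1 <;> first | rfl | ring
  have h2 : HasDerivAt (fun x : ℝ => 4 * ((k : ℝ) - 1 / 2) ^ 2 * x)
      (4 * ((k : ℝ) - 1 / 2) ^ 2) x := by
    simpa using (hasDerivAt_id x).const_mul (4 * ((k : ℝ) - 1 / 2) ^ 2)
  exact h1.sub h2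

lemma deriv_Vn (n : ℕ) :
    deriv (Vn n) = fun x =>
      ∑ k ∈ Finset.Icc 1 n, (∏ j ∈ (Finset.Icc 1 n).erase k, gfun j x) * bfun k x := by
  funext x
  have hV : Vn n = (∏ i ∈ Finset.Icc 1 n, gfun i ·) := by
    funext y; simp [Vn, gfun]
  have h := HasDerivAt.fun_finsetProd (u := Finset.Icc 1 n) (f := gfun)
    (f' := fun k => bfun k x) (x := x) (fun i _ => hasDerivAt_gfun i x)
  rw [hV, h.deriv]
  simp [smul_eq_mul]

lemma deriv2_Vn (n : ℕ) :
    deriv (deriv (Vn n)) 0 =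
      ∑ k ∈ Finset.Icc 1 n,
        (∏ j ∈ (Finset.Icc 1 n).erase k, ((j : ℝ) - 1 / 2) ^ 4) *
          (-(4 * ((k : ℝ) - 1 / 2) ^ 2)) := by
  rw [deriv_Vn]
  have hterm : ∀ k ∈ Finset.Icc 1 n,
      HasDerivAt (fun x => (∏ j ∈ (Finset.Icc 1 n).erase k, gfun j x) * bfun k x)
        ((∏ j ∈ (Finset.Icc 1 n).erase k, ((j : ℝ) - 1 / 2) ^ 4) *
          (-(4 * ((k : ℝ) - 1 / 2) ^ 2))) 0 := by
    intro k _
    have hA := HasDerivAt.fun_finsetProd (u := (Finset.Icc 1 n).erase k) (f := gfun)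
      (f' := fun j => bfun j 0) (x := (0 : ℝ)) (fun i _ => hasDerivAt_gfun i 0)
    have hB := hasDerivAt_bfun k 0
    have h := hA.mul hB
    refine h.congr_deriv ?_
    have hb0 : bfun k 0 = 0 := by simp [bfun]
    have hg0 : ∀ j, gfun j 0 = ((j : ℝ) - 1 / 2) ^ 4 := by
      intro j; simp [gfun]; ring
    simp only [hb0, mul_zero, zero_mul, zero_add]
    rw [Finset.prod_congr rfl fun j _ => hg0 j]
    ring
  have hsum := HasDerivAt.fun_sum hterm
  rw [hsum.deriv]

theorem stmt15 (n : ℕ) (hn : 1 ≤ n) :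
    deriv (deriv (Vn n)) 0 =
      -4 * (∏ k ∈ Finset.Icc 1 n, ((k : ℝ) - 1 / 2) ^ 4) *
        (∑ k ∈ Finset.Icc 1 n, (((k : ℝ) - 1 / 2) ^ 2)⁻¹) ∧
    deriv (deriv (Vn n)) 0 < 0 := by
  have hc : ∀ k ∈ Finset.Icc 1 n, (0 : ℝ) < (k : ℝ) - 1 / 2 := by
    intro k hk
    have h1 : 1 ≤ k := (Finset.mem_Icc.mp hk).1
    have : (1 : ℝ) ≤ (k : ℝ) := by exact_mod_cast h1
    linarith
  have heq : deriv (deriv (Vn n)) 0 =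
      -4 * (∏ k ∈ Finset.Icc 1 n, ((k : ℝ) - 1 / 2) ^ 4) *
        (∑ k ∈ Finset.Icc 1 n, (((k : ℝ) - 1 / 2) ^ 2)⁻¹) := by
    rw [deriv2_Vn]
    rw [Finset.mul_sum]
    refine Finset.sum_congr rfl fun k hk => ?_
    have hck := hc k hk
    have hprod : ((k : ℝ) - 1 / 2) ^ 4 * ∏ j ∈ (Finset.Icc 1 n).erase k, ((j : ℝ) - 1 / 2) ^ 4
        = ∏ j ∈ Finset.Icc 1 n, ((j : ℝ) - 1 / 2) ^ 4 :=
      Finset.mul_prod_erase (Finset.Icc 1 n) (fun j => ((j : ℝ) - 1 / 2) ^ 4) hk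
    rw [← hprod]
    have hne : ((k : ℝ) - 1 / 2) ≠ 0 := ne_of_gt hck
    rw [← div_eq_mul_inv, eq_div_iff (by positivity)]
    ring
  refine ⟨heq, ?_⟩
  rw [heq]
  have hprodpos : 0 < ∏ k ∈ Finset.Icc 1 n, ((k : ℝ) - 1 / 2) ^ 4 :=
    Finset.prod_pos fun k hk => pow_pos (hc k hk) 4
  have hsumpos : 0 < ∑ k ∈ Finset.Icc 1 n, (((k : ℝ) - 1 / 2) ^ 2)⁻¹ := by
    refine Finset.sum_pos (fun k hk => inv_pos.mpr (pow_pos (hc k hk) 2)) ?_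
    exact ⟨1, Finset.mem_Icc.mpr ⟨le_refl 1, hn⟩⟩
  nlinarith
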